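/- Let H be a real inner product space, w ∈ H, and let x₁,…,xₙ ∈ H with labels yᵢ ∈ {±1}. Define hᵢ = min(1, yᵢ⟨w, xᵢ⟩). Suppose w̃ ∈ H satisfies: for every i with hᵢ > 0, hᵢ - yᵢ⟨w̃, xᵢ⟩ ≤ 1/2. Then for every i, ℓ_slant(yᵢ⟨w̃, xᵢ⟩) ≤ ℓ_hinge(yᵢ⟨w, xᵢ⟩), where ℓ_slant(z) = min(1, max(0, 1/2 - z)) and ℓ_hinge(z) = max(0, 1 - z). Consequently (1/n)Σᵢ ℓ_slant(yᵢ⟨w̃, xᵢ⟩) ≤ (1/n)Σᵢ ℓ_hinge(yᵢ⟨w, xᵢ⟩). -/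

import Mathlib

/-- If `w̃` solves the sparsification problem to value at most `1/2`
(that is, `hᵢ - yᵢ⟨w̃,xᵢ⟩ ≤ 1/2` whenever `hᵢ = min(1, yᵢ⟨w,xᵢ⟩) > 0`), then the
slant loss of `w̃` is bounded pointwise by the hinge loss of `w`, and hence so are
the empirical averages. -/
theorem stmt4 {H : Type*} [NormedAddCommGroup H] [InnerProductSpace ℝ H]
    (n : ℕ) (hn : 0 < n) (x : Fin n → H) (y : Fin n → ℝ)
    (hy : ∀ i, y i = 1 ∨ y i = -1) (w wt : H)
    (happrox : ∀ i, 0 < min 1 (y i * (inner ℝ w (x i) : ℝ)) →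
      min 1 (y i * (inner ℝ w (x i) : ℝ)) - y i * (inner ℝ wt (x i) : ℝ) ≤ 1 / 2) :
    (∀ i, min 1 (max 0 (1 / 2 - y i * (inner ℝ wt (x i) : ℝ)))
        ≤ max 0 (1 - y i * (inner ℝ w (x i) : ℝ))) ∧
    (1 / (n : ℝ)) * ∑ i, min 1 (max 0 (1 / 2 - y i * (inner ℝ wt (x i) : ℝ)))
        ≤ (1 / (n : ℝ)) * ∑ i, max 0 (1 - y i * (inner ℝ w (x i) : ℝ)) := by
  have key : ∀ i, min 1 (max 0 (1 / 2 - y i * (inner ℝ wt (x i) : ℝ)))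
      ≤ max 0 (1 - y i * (inner ℝ w (x i) : ℝ)) := by
    intro i
    by_cases h : 0 < min 1 (y i * (inner ℝ w (x i) : ℝ))
    · have hb := happrox i h
      rcases le_total (y i * (inner ℝ w (x i) : ℝ)) 1 with ha | ha
      · rw [min_eq_right ha] at hb
        calc min 1 (max 0 (1 / 2 - y i * (inner ℝ wt (x i) : ℝ)))
            ≤ max 0 (1 / 2 - y i * (inner ℝ wt (x i) : ℝ)) := min_le_right _ _
          _ ≤ max 0 (1 - y i * (inner ℝ w (x i) : ℝ)) :=
              max_le_max le_rfl (by linarith)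
      · rw [min_eq_left ha] at hb
        calc min 1 (max 0 (1 / 2 - y i * (inner ℝ wt (x i) : ℝ)))
            ≤ max 0 (1 / 2 - y i * (inner ℝ wt (x i) : ℝ)) := min_le_right _ _
          _ ≤ 0 := max_le le_rfl (by linarith)
          _ ≤ max 0 (1 - y i * (inner ℝ w (x i) : ℝ)) := le_max_left _ _
    · push_neg at h
      have ha : y i * (inner ℝ w (x i) : ℝ) ≤ 0 := by
        rcases le_total (y i * (inner ℝ w (x i) : ℝ)) 1 with h1 | h1
        · simpa [min_eq_right h1] using h
        · rw [min_eq_left h1] at h; linarith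
      calc min 1 (max 0 (1 / 2 - y i * (inner ℝ wt (x i) : ℝ))) ≤ 1 := min_le_left _ _
        _ ≤ 1 - y i * (inner ℝ w (x i) : ℝ) := by linarith
        _ ≤ max 0 (1 - y i * (inner ℝ w (x i) : ℝ)) := le_max_right _ _
  refine ⟨key, ?_⟩
  apply mul_le_mul_of_nonneg_left (Finset.sum_le_sum fun i _ => key i)
  positivity
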